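/- If R : ℝ^d → ℝ is L-smooth and w_{t+1} = w_t − α G_t where G_t is a possibly biased stochastic gradient satisfying E_t[G_t] = ∇g_t(w_t)ᵀ∇f(u_t) with ‖∇g‖ ≤ C_l and ∇f L_f-Lipschitz, then E_t[R(w_{t+1})] ≤ R(w_t) − (α/2)‖∇R(w_t)‖² + (α C_l² L_f²/2) E_t[‖g_t(w_t) − u_t‖²] + α² L C²/2, where C bounds ‖G_t‖. -/

import Mathlib

open MeasureTheory

set_option maxHeartbeats 1000000

-- Jensen: (∫h)² ≤ ∫h² for integrable h with h² integrable, probability measure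
theorem sq_integral_le_integral_sq' {Ω : Type*} [MeasureSpace Ω] (μ : Measure Ω)
    [IsProbabilityMeasure μ] (h : Ω → ℝ) (hInt : Integrable h μ)
    (hSq : Integrable (fun ω => h ω ^ 2) μ) :
    (∫ ω, h ω ∂μ) ^ 2 ≤ ∫ ω, h ω ^ 2 ∂μ := by
  set c := ∫ ω, h ω ∂μ with hc
  have h1 : Integrable (fun ω => (h ω - c) ^ 2) μ := by
    have : (fun ω => (h ω - c) ^ 2) = fun ω => h ω ^ 2 - (2 * c) * h ω + c ^ 2 := by
      funext ω; ring
    rw [this]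
    exact ((hSq.sub (hInt.const_mul (2 * c))).add (integrable_const _))
  have h2 : 0 ≤ ∫ ω, (h ω - c) ^ 2 ∂μ :=
    integral_nonneg fun ω => sq_nonneg _
  have h3 : ∫ ω, (h ω - c) ^ 2 ∂μ = (∫ ω, h ω ^ 2 ∂μ) - c ^ 2 := by
    have : (fun ω => (h ω - c) ^ 2) = fun ω => h ω ^ 2 - (2 * c) * h ω + c ^ 2 := by
      funext ω; ring
    have i1 : Integrable (fun ω => h ω ^ 2 - (2 * c) * h ω) μ := hSq.sub (hInt.const_mul (2 * c))
    rw [this, integral_add i1 (integrable_const _),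
      integral_sub hSq (hInt.const_mul (2 * c)), MeasureTheory.integral_const_mul, integral_const]
    simp [← hc]
    ring
  linarith [h3 ▸ h2]

/-- Descent lemma for the biased compositional stochastic gradient step: if `R` is
`L`-smooth with gradient `gR`, and the stochastic gradient is
`G ω = (J ω)ᵀ (∇f (u ω))` with `E[(J ω)ᵀ (∇f (gval ω))] = gR w` (the true gradient),
`‖J ω‖ ≤ C_l`, `∇f` `L_f`-Lipschitz, and `‖G ω‖ ≤ C`, then the update `w − α • G ω`
satisfies
`E[R(w − α G)] ≤ R(w) − (α/2)‖gR w‖² + (α C_l² L_f²/2) E‖gval − u‖² + α² L C²/2`. -/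
theorem biased_sgd_descent_lemma
    {d m : ℕ} {Ω : Type*} [MeasureSpace Ω] (μ : Measure Ω) [IsProbabilityMeasure μ]
    (R : EuclideanSpace ℝ (Fin d) → ℝ)
    (gR : EuclideanSpace ℝ (Fin d) → EuclideanSpace ℝ (Fin d))
    (gradf : EuclideanSpace ℝ (Fin m) → EuclideanSpace ℝ (Fin m))
    (J : Ω → (EuclideanSpace ℝ (Fin d) →L[ℝ] EuclideanSpace ℝ (Fin m)))
    (gval u : Ω → EuclideanSpace ℝ (Fin m))
    (w : EuclideanSpace ℝ (Fin d))
    (α L Cl Lf C : ℝ)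
    (hα : 0 < α) (hL : 0 ≤ L) (hCl : 0 ≤ Cl) (hLf : 0 ≤ Lf) (hC : 0 ≤ C)
    (hsmooth : ∀ x y, R y ≤ R x + (inner ℝ (gR x) (y - x) : ℝ) + L / 2 * ‖y - x‖ ^ 2)
    (hJ : ∀ ω, ‖J ω‖ ≤ Cl)
    (hgradf : ∀ x y, ‖gradf x - gradf y‖ ≤ Lf * ‖x - y‖)
    (hGbound : ∀ ω, ‖ContinuousLinearMap.adjoint (J ω) (gradf (u ω))‖ ≤ C)
    (hintG : Integrable (fun ω => ContinuousLinearMap.adjoint (J ω) (gradf (u ω))) μ)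
    (hintR : Integrable
      (fun ω => R (w - α • ContinuousLinearMap.adjoint (J ω) (gradf (u ω)))) μ)
    (hintTrue : Integrable (fun ω => ContinuousLinearMap.adjoint (J ω) (gradf (gval ω))) μ)
    (hintSq : Integrable (fun ω => ‖gval ω - u ω‖ ^ 2) μ)
    (hmean : ∫ ω, ContinuousLinearMap.adjoint (J ω) (gradf (gval ω)) ∂μ = gR w) :
    ∫ ω, R (w - α • ContinuousLinearMap.adjoint (J ω) (gradf (u ω))) ∂μ ≤
      R w - α / 2 * ‖gR w‖ ^ 2 +
        α * Cl ^ 2 * Lf ^ 2 / 2 * ∫ ω, ‖gval ω - u ω‖ ^ 2 ∂μ +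
        α ^ 2 * L * C ^ 2 / 2 := by
  set G : Ω → EuclideanSpace ℝ (Fin d) :=
    fun ω => ContinuousLinearMap.adjoint (J ω) (gradf (u ω)) with hG
  set T : Ω → EuclideanSpace ℝ (Fin d) :=
    fun ω => ContinuousLinearMap.adjoint (J ω) (gradf (gval ω)) with hT
  set h : Ω → ℝ := fun ω => ‖gval ω - u ω‖ with hh
  -- integrability of h
  have hmeas : AEStronglyMeasurable h μ := by
    have : h = fun ω => Real.sqrt (‖gval ω - u ω‖ ^ 2) := by
      funext ω; simp [hh, Real.sqrt_sq (norm_nonneg _)]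
    rw [this]
    exact Real.continuous_sqrt.comp_aestronglyMeasurable hintSq.aestronglyMeasurable
  have hIntH : Integrable h μ := by
    refine Integrable.mono' (((integrable_const (1:ℝ)).add hintSq).div_const 2) hmeas ?_
    filter_upwards with ω
    simp only [hh, Pi.add_apply, Real.norm_eq_abs, abs_of_nonneg (norm_nonneg _)]
    nlinarith [sq_nonneg (‖gval ω - u ω‖ - 1)]
  -- pointwise difference bound
  have hGT : ∀ ω, ‖G ω - T ω‖ ≤ Cl * Lf * h ω := by
    intro ω
    have h1 : G ω - T ω = ContinuousLinearMap.adjoint (J ω) (gradf (u ω) - gradf (gval ω)) := by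
      simp [hG, hT, map_sub]
    rw [h1]
    calc ‖ContinuousLinearMap.adjoint (J ω) (gradf (u ω) - gradf (gval ω))‖
        ≤ ‖ContinuousLinearMap.adjoint (J ω)‖ * ‖gradf (u ω) - gradf (gval ω)‖ :=
          ContinuousLinearMap.le_opNorm _ _
      _ ≤ Cl * (Lf * ‖u ω - gval ω‖) := by
          apply mul_le_mul _ (hgradf _ _) (norm_nonneg _) hCl
          rw [ContinuousLinearMap.adjoint.norm_map (J ω)]
          exact hJ ω
      _ = Cl * Lf * h ω := by rw [norm_sub_rev]; ring
  -- bias bound : ‖gR w - ∫G‖ ≤ Cl * Lf * ∫ h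
  have hbias : ‖(∫ ω, G ω ∂μ) - gR w‖ ≤ Cl * Lf * ∫ ω, h ω ∂μ := by
    rw [← hmean, ← integral_sub hintG hintTrue]
    calc ‖∫ ω, G ω - T ω ∂μ‖ ≤ ∫ ω, ‖G ω - T ω‖ ∂μ := norm_integral_le_integral_norm _
      _ ≤ ∫ ω, Cl * Lf * h ω ∂μ := by
          refine integral_mono ((hintG.sub hintTrue).norm) (hIntH.const_mul _) hGT
      _ = Cl * Lf * ∫ ω, h ω ∂μ := MeasureTheory.integral_const_mul _ _
  -- Jensen
  have hJensen : (∫ ω, h ω ∂μ) ^ 2 ≤ ∫ ω, h ω ^ 2 ∂μ :=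
    sq_integral_le_integral_sq' μ h hIntH (by simpa [hh] using hintSq)
  -- second moment bound
  have hIntNormSqG : Integrable (fun ω => ‖G ω‖ ^ 2) μ := by
    refine Integrable.mono' (integrable_const (C ^ 2)) ?_ ?_
    · exact (continuous_pow 2).comp_aestronglyMeasurable hintG.aestronglyMeasurable.norm
    · filter_upwards with ω
      rw [Real.norm_eq_abs, abs_of_nonneg (sq_nonneg _)]
      exact pow_le_pow_left₀ (norm_nonneg _) (hGbound ω) 2
  have hSecond : ∫ ω, ‖G ω‖ ^ 2 ∂μ ≤ C ^ 2 := by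
    calc ∫ ω, ‖G ω‖ ^ 2 ∂μ ≤ ∫ _, C ^ 2 ∂μ :=
        integral_mono hIntNormSqG (integrable_const _) fun ω =>
          pow_le_pow_left₀ (norm_nonneg _) (hGbound ω) 2
      _ = C ^ 2 := by simp
  -- pointwise smoothness bound and integration
  have hptwise : ∀ ω, R (w - α • G ω) ≤
      R w - α * (inner ℝ (gR w) (G ω) : ℝ) + L / 2 * (α ^ 2 * ‖G ω‖ ^ 2) := by
    intro ω
    have := hsmooth w (w - α • G ω)
    have h1 : w - α • G ω - w = -(α • G ω) := by abel
    rw [h1] at this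
    simpa [inner_neg_right, inner_smul_right, norm_smul, mul_pow, abs_of_pos hα,
      sub_eq_add_neg, mul_comm] using this
  have hint2 : Integrable (fun ω => R w - α * (inner ℝ (gR w) (G ω) : ℝ)
      + L / 2 * (α ^ 2 * ‖G ω‖ ^ 2)) μ := by
    refine Integrable.add (Integrable.sub (integrable_const _) ?_) ?_
    · exact ((hintG.const_inner (gR w)).const_mul α)
    · exact (hIntNormSqG.const_mul _).const_mul _
  have hmain : ∫ ω, R (w - α • G ω) ∂μ ≤
      R w - α * (inner ℝ (gR w) (∫ ω, G ω ∂μ) : ℝ) + L / 2 * (α ^ 2 * ∫ ω, ‖G ω‖ ^ 2 ∂μ) := by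
    calc ∫ ω, R (w - α • G ω) ∂μ
        ≤ ∫ ω, (R w - α * (inner ℝ (gR w) (G ω) : ℝ) + L / 2 * (α ^ 2 * ‖G ω‖ ^ 2)) ∂μ :=
          integral_mono hintR hint2 hptwise
      _ = R w - α * (inner ℝ (gR w) (∫ ω, G ω ∂μ) : ℝ)
          + L / 2 * (α ^ 2 * ∫ ω, ‖G ω‖ ^ 2 ∂μ) := by
          have i1 : Integrable (fun ω => R w - α * (inner ℝ (gR w) (G ω) : ℝ)) μ :=
            (integrable_const _).sub ((hintG.const_inner (gR w)).const_mul α)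
          rw [integral_add i1 ((hIntNormSqG.const_mul _).const_mul _),
            integral_sub (integrable_const _) ((hintG.const_inner (gR w)).const_mul α),
            MeasureTheory.integral_const_mul, MeasureTheory.integral_const_mul,
            MeasureTheory.integral_const_mul, integral_const, ← integral_inner hintG]
          simp
  -- combine
  set D : EuclideanSpace ℝ (Fin d) := ∫ ω, G ω ∂μ with hD
  have key : -(α * (inner ℝ (gR w) D : ℝ)) ≤
      - α / 2 * ‖gR w‖ ^ 2 + α / 2 * ‖D - gR w‖ ^ 2 := by
    have e1 : (inner ℝ (gR w) D : ℝ) = ‖gR w‖ ^ 2 + (inner ℝ (gR w) (D - gR w) : ℝ) := by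
      rw [inner_sub_right, real_inner_self_eq_norm_sq]; ring
    have e2 : -(inner ℝ (gR w) (D - gR w) : ℝ) ≤ ‖gR w‖ ^ 2 / 2 + ‖D - gR w‖ ^ 2 / 2 := by
      have := abs_real_inner_le_norm (gR w) (D - gR w)
      nlinarith [sq_nonneg (‖gR w‖ - ‖D - gR w‖), abs_le.mp this]
    rw [e1]
    nlinarith
  have hbias2 : ‖D - gR w‖ ^ 2 ≤ Cl ^ 2 * Lf ^ 2 * ∫ ω, h ω ^ 2 ∂μ := by
    have h0 : 0 ≤ ∫ ω, h ω ∂μ := integral_nonneg fun ω => norm_nonneg _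
    have := pow_le_pow_left₀ (norm_nonneg _) hbias 2
    calc ‖D - gR w‖ ^ 2 ≤ (Cl * Lf * ∫ ω, h ω ∂μ) ^ 2 := this
      _ = Cl ^ 2 * Lf ^ 2 * (∫ ω, h ω ∂μ) ^ 2 := by ring
      _ ≤ Cl ^ 2 * Lf ^ 2 * ∫ ω, h ω ^ 2 ∂μ := by
          apply mul_le_mul_of_nonneg_left hJensen (by positivity)
  have hIntSqEq : ∫ ω, h ω ^ 2 ∂μ = ∫ ω, ‖gval ω - u ω‖ ^ 2 ∂μ := rfl
  rw [hIntSqEq] at hbias2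
  calc ∫ ω, R (w - α • G ω) ∂μ
      ≤ R w - α * (inner ℝ (gR w) D : ℝ) + L / 2 * (α ^ 2 * ∫ ω, ‖G ω‖ ^ 2 ∂μ) := hmain
    _ ≤ R w + (- α / 2 * ‖gR w‖ ^ 2 + α / 2 * ‖D - gR w‖ ^ 2)
        + L / 2 * (α ^ 2 * C ^ 2) := by
        have := mul_le_mul_of_nonneg_left hSecond (by positivity : (0:ℝ) ≤ α ^ 2)
        nlinarith [key]
    _ ≤ R w - α / 2 * ‖gR w‖ ^ 2 +
        α * Cl ^ 2 * Lf ^ 2 / 2 * ∫ ω, ‖gval ω - u ω‖ ^ 2 ∂μ +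
        α ^ 2 * L * C ^ 2 / 2 := by
        nlinarith [mul_le_mul_of_nonneg_left hbias2 (le_of_lt (half_pos hα))]
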